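/- Let K, N_R ∈ ℕ and d : Fin K → ℝ with d_i ≥ 0 for all i, and set Λ_R = ∑_i d_i. On S = {x : Fin K → ℕ | ∑_i x_i ≤ N_R} define π(x) = (N_R!/(1+Λ_R)^{N_R})·(1/(N_R − ∑_i x_i)!)·∏_i d_i^{x_i}/x_i!. Then for every n ≤ N_R, ∑_{x ∈ S, ∑_i x_i = N_R − n} π(x) = C(N_R, n)·Λ_R^{N_R − n}/(1 + Λ_R)^{N_R}; i.e. under π the number of free ribosomes F_R = N_R − ∑_i x_i has the binomial distribution B(N_R, 1/(1+Λ_R)). -/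

import Mathlib

open Finset

lemma sum_prod_pow_div_factorial {K : ℕ} (d : Fin K → ℝ) (m : ℕ) :
    (∑ x ∈ Finset.piAntidiag (Finset.univ : Finset (Fin K)) m,
        ∏ i, d i ^ (x i) / (Nat.factorial (x i) : ℝ))
      = (∑ i, d i) ^ m / (Nat.factorial m : ℝ) := by
  rw [Finset.sum_pow_eq_sum_piAntidiag, Finset.sum_div]
  refine Finset.sum_congr rfl fun x hx => ?_
  rw [Finset.mem_piAntidiag] at hx
  have hsum : ∑ i, x i = m := hx.1
  have hspec := Nat.multinomial_spec Finset.univ x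
  rw [hsum] at hspec
  have hfacpos : (0:ℝ) < ∏ i, (Nat.factorial (x i) : ℝ) :=
    Finset.prod_pos fun i _ => by exact_mod_cast Nat.factorial_pos _
  have hm : (Nat.factorial m : ℝ) ≠ 0 := by exact_mod_cast (Nat.factorial_pos m).ne'
  rw [Finset.prod_div_distrib]
  rw [div_eq_div_iff hfacpos.ne' hm]
  have : ((∏ i, Nat.factorial (x i)) : ℝ) * (Nat.multinomial Finset.univ x : ℝ)
      = (Nat.factorial m : ℝ) := by exact_mod_cast congrArg (Nat.cast (R := ℝ)) hspec
  push_cast at this ⊢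
  linear_combination (-(∏ i, d i ^ x i)) * this

/-- For the invariant distribution
`π x = (N_R!/(1+Λ_R)^{N_R}) (1/(N_R − ∑ x i)!) ∏ i, d i^{x i}/(x i)!` of the ribosome
allocation model on `S = {x : Fin K → ℕ | ∑ i, x i ≤ N_R}` (with `Λ_R = ∑ i, d i`): for
every `n ≤ N_R`, the `π`-probability that `∑ i, x i = N_R − n` equals
`C(N_R, n) Λ_R^{N_R−n}/(1+Λ_R)^{N_R}`, i.e. the number of free ribosomes
`F_R = N_R − ∑ i, x i` is binomially distributed `B(N_R, 1/(1+Λ_R))` under `π`. -/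
theorem ribosome_free_binomial
    (K NR : ℕ) (d : Fin K → ℝ) (hd : ∀ i, 0 ≤ d i)
    (ΛR : ℝ) (hΛ : ΛR = ∑ i, d i)
    (S : Finset (Fin K → ℕ))
    (hS : S = (Finset.Iic (fun _ => NR)).filter (fun x => (∑ i, x i) ≤ NR))
    (π : (Fin K → ℕ) → ℝ)
    (hπ : ∀ x, π x = (Nat.factorial NR : ℝ) / (1 + ΛR) ^ NR
      * (1 / (Nat.factorial (NR - ∑ i, x i) : ℝ))
      * ∏ i, d i ^ (x i) / (Nat.factorial (x i) : ℝ)) :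
    ∀ n : ℕ, n ≤ NR →
      (∑ x ∈ S.filter (fun x => (∑ i, x i) = NR - n), π x)
        = (Nat.choose NR n : ℝ) * ΛR ^ (NR - n) / (1 + ΛR) ^ NR := by
  intro n hn
  set m := NR - n with hm
  have hset : S.filter (fun x => (∑ i, x i) = m)
      = Finset.piAntidiag (Finset.univ : Finset (Fin K)) m := by
    ext x
    simp only [hS, Finset.mem_filter, Finset.mem_Iic, Finset.mem_piAntidiag,
      Finset.mem_univ, imp_true_iff, and_true]
    constructor
    · rintro ⟨⟨-, -⟩, h⟩; exact h
    · intro h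
      have h2 : (∑ i, x i) = m := h
      refine ⟨⟨fun i => ?_, by omega⟩, h⟩
      calc x i ≤ ∑ j, x j := Finset.single_le_sum (fun j _ => Nat.zero_le _) (Finset.mem_univ i)
        _ ≤ NR := by omega
  rw [hset]
  have key : ∀ x ∈ Finset.piAntidiag (Finset.univ : Finset (Fin K)) m,
      π x = (Nat.factorial NR : ℝ) / (1 + ΛR) ^ NR
        * (1 / (Nat.factorial n : ℝ))
        * ∏ i, d i ^ (x i) / (Nat.factorial (x i) : ℝ) := by
    intro x hx
    rw [Finset.mem_piAntidiag] at hx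
    have h2 : (∑ i, x i) = m := hx.1
    have h3 : NR - (∑ i, x i) = n := by omega
    rw [hπ, h3]
  rw [Finset.sum_congr rfl key, ← Finset.mul_sum, sum_prod_pow_div_factorial, ← hΛ]
  have hchoose : (Nat.choose NR n : ℝ) * (Nat.factorial n : ℝ) * (Nat.factorial m : ℝ)
      = (Nat.factorial NR : ℝ) := by
    exact_mod_cast congrArg (Nat.cast (R := ℝ)) (Nat.choose_mul_factorial_mul_factorial hn)
  have hnpos : (0:ℝ) < Nat.factorial n := by exact_mod_cast Nat.factorial_pos n
  have hmpos : (0:ℝ) < Nat.factorial m := by exact_mod_cast Nat.factorial_pos m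
  by_cases hp : (1 + ΛR) ^ NR = 0
  · rw [hp]; simp
  · field_simp
    linear_combination (-(ΛR ^ m)) * hchoose
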